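/- Suppose F ⊆ ω^ω, F⁻ = F ∖ 0*, there is an interval partition J = ⟨J_m : m < ω⟩ of ω that dominates the interval partition I^f for every f ∈ F⁻ (where I^f is determined by the positions of nonzero values of f), and there is a predictor π predicting every f ∈ F⁻. Then there exists a predictor π′ that predicts every f ∈ F⁻ and predicts no f ∈ 0*. Consequently, 𝔢₀ ≥ min{𝔢, 𝔟}. -/

import Mathlib

open Filter Set

def restr (f : ℕ → ℕ) (n : ℕ) : ℕ → ℕ := fun i => if i < n then f i else 0

def EvZero (f : ℕ → ℕ) : Prop := ∀ᶠ n in atTop, f n = 0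

structure Predictor where
  D : Set ℕ
  Dinf : D.Infinite
  p : ℕ → (ℕ → ℕ) → ℕ

def Predicts (π : Predictor) (f : ℕ → ℕ) : Prop :=
  ∀ᶠ n in atTop, n ∈ π.D → f n = π.p n (restr f n)

def ZPredicts (π : Predictor) (f : ℕ → ℕ) : Prop :=
  (¬ EvZero f ∧ Predicts π f) ∨ (EvZero f ∧ ¬ Predicts π f)

noncomputable def eNum : Cardinal :=
  sInf { c | ∃ F : Set (ℕ → ℕ), Cardinal.mk F = c ∧ ∀ π : Predictor, ∃ f ∈ F, ¬ Predicts π f }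

noncomputable def eZero : Cardinal :=
  sInf { c | ∃ F : Set (ℕ → ℕ), Cardinal.mk F = c ∧ ∀ π : Predictor, ∃ f ∈ F, ¬ ZPredicts π f }

noncomputable def bNum : Cardinal :=
  sInf { c | ∃ F : Set (ℕ → ℕ), Cardinal.mk F = c ∧
    ∀ g : ℕ → ℕ, ∃ f ∈ F, ¬ ∀ᶠ n in atTop, f n ≤ g n }

structure IntPart where
  t : ℕ → ℕ
  t0 : t 0 = 0
  mono : StrictMono t

def blk (P : IntPart) (m : ℕ) : Set ℕ := Set.Ico (P.t m) (P.t (m+1))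

def IPle (I J : IntPart) : Prop := ∀ᶠ m in atTop, ∃ n, blk I n ⊆ blk J m

def IsNZPart (f : ℕ → ℕ) (P : IntPart) : Prop :=
  (∀ k, f (P.t (k+1)) ≠ 0) ∧ ∀ i, f i ≠ 0 → ∃ k, i = P.t (k+1)

/-! ### Auxiliary machinery -/

/-- the index of the last complete block of `J` below `n` -/
noncomputable def mIdx (J : IntPart) (n : ℕ) : ℕ :=
  Nat.findGreatest (fun m => J.t (m+1) ≤ n) n

lemma self_le_t (J : IntPart) (m : ℕ) : m ≤ J.t m := J.mono.le_apply

lemma le_mIdx (J : IntPart) {n m : ℕ} (h : J.t (m+1) ≤ n) : m ≤ mIdx J n :=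
  Nat.le_findGreatest (le_trans (le_trans (Nat.le_succ m) (self_le_t J (m+1))) h) h

lemma mIdx_spec (J : IntPart) {n : ℕ} (h : J.t 1 ≤ n) : J.t (mIdx J n + 1) ≤ n :=
  Nat.findGreatest_spec (P := fun m => J.t (m+1) ≤ n) (m := 0) (n := n) (Nat.zero_le n) h

open Classical in
/-- the modified predictor -/
noncomputable def auxP (J : IntPart) (π : Predictor) : Predictor where
  D := π.D
  Dinf := π.Dinf
  p := fun n h =>
    if ∃ i ∈ blk J (mIdx J n), h i ≠ 0 then π.p n h else π.p n h + 1

lemma auxP_not_pred (J : IntPart) (π : Predictor) (f : ℕ → ℕ) (hf : EvZero f) :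
    ¬ Predicts (auxP J π) f := by
  intro hp
  obtain ⟨N, hN⟩ := eventually_atTop.mp hf
  obtain ⟨N', hN'⟩ := eventually_atTop.mp hp
  obtain ⟨n, hn⟩ := ((π.Dinf).diff (Set.finite_Iic (max N' (J.t (N+1))))).nonempty
  have hnD : n ∈ π.D := hn.1
  have hnge : max N' (J.t (N+1)) < n := by
    have h2 := hn.2
    simp only [Set.mem_Iic] at h2
    omega
  have h1 : N' ≤ n := le_trans (le_max_left _ _) hnge.le
  have h2 : J.t (N+1) ≤ n := le_trans (le_max_right _ _) hnge.le
  have hmge : N ≤ mIdx J n := le_mIdx J h2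
  have hcond : ¬ ∃ i ∈ blk J (mIdx J n), restr f n i ≠ 0 := by
    rintro ⟨i, hi, hne⟩
    have hiN : N ≤ i := le_trans (le_trans hmge (self_le_t J _)) hi.1
    have : restr f n i = 0 := by
      unfold restr
      split
      · exact hN i hiN
      · rfl
    exact hne this
  have heq := hN' n h1 hnD
  have hfn : f n = 0 := hN n (by
    have : N + 1 ≤ J.t (N+1) := self_le_t J (N+1)
    omega)
  rw [hfn] at heq
  unfold auxP at heq
  simp only at heq
  rw [if_neg hcond] at heq
  omega

lemma auxP_pred (J : IntPart) (π : Predictor) (f : ℕ → ℕ) (hp : Predicts π f)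
    (hfreq : ∀ᶠ m in atTop, ∃ i ∈ blk J m, f i ≠ 0) : Predicts (auxP J π) f := by
  obtain ⟨M, hM⟩ := eventually_atTop.mp hfreq
  obtain ⟨N, hN⟩ := eventually_atTop.mp hp
  rw [Predicts, eventually_atTop]
  refine ⟨max N (J.t (M+1)), fun n hn hD => ?_⟩
  have h1 : J.t (M+1) ≤ n := le_trans (le_max_right _ _) hn
  have hm : M ≤ mIdx J n := le_mIdx J h1
  have hspec : J.t (mIdx J n + 1) ≤ n :=
    mIdx_spec J (le_trans (J.mono.monotone (by omega : 1 ≤ M+1)) h1)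
  obtain ⟨i, hiblk, hine⟩ := hM (mIdx J n) hm
  have hin : i < n := lt_of_lt_of_le hiblk.2 hspec
  have hcond : ∃ i ∈ blk J (mIdx J n), restr f n i ≠ 0 := by
    refine ⟨i, hiblk, ?_⟩
    unfold restr
    rw [if_pos hin]
    exact hine
  have hPeq : (auxP J π).p n (restr f n) = π.p n (restr f n) := by
    unfold auxP
    simp only
    rw [if_pos hcond]
  rw [hPeq]
  exact hN n (le_trans (le_max_left _ _) hn) hD

lemma freq_of (f : ℕ → ℕ) (I J : IntPart) (h1 : IsNZPart f I) (h2 : IPle I J) :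
    ∀ᶠ m in atTop, ∃ i ∈ blk J m, f i ≠ 0 := by
  filter_upwards [h2, eventually_ge_atTop 1] with m hk hm1
  obtain ⟨k, hk⟩ := hk
  have hmem : I.t k ∈ blk I k := ⟨le_refl _, I.mono (Nat.lt_succ_self k)⟩
  have hJ : I.t k ∈ blk J m := hk hmem
  have h1m : 1 ≤ J.t m := le_trans hm1 (self_le_t J m)
  have hk0 : k ≠ 0 := by
    intro h
    rw [h, I.t0] at hJ
    have := hJ.1
    omega
  obtain ⟨k', rfl⟩ := Nat.exists_eq_succ_of_ne_zero hk0
  exact ⟨I.t (k'+1), hJ, h1.1 k'⟩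

/-- the diagonal function evading a given predictor -/
noncomputable def diag (π : Predictor) : ℕ → ℕ
  | n => π.p n (fun i => if _ : i < n then diag π i else 0) + 1

lemma diag_eq (π : Predictor) (n : ℕ) :
    diag π n = π.p n (restr (diag π) n) + 1 := by
  rw [diag]
  congr 2

lemma not_ZPredicts_diag (π : Predictor) : ¬ ZPredicts π (diag π) := by
  have hnz : ¬ EvZero (diag π) := by
    intro h
    obtain ⟨n, hn⟩ := h.exists
    rw [diag_eq] at hn
    omega
  have hnp : ¬ Predicts π (diag π) := by
    intro hp
    obtain ⟨N, hN⟩ := eventually_atTop.mp hp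
    obtain ⟨n, hn⟩ := ((π.Dinf).diff (Set.finite_Iic N)).nonempty
    have hge : N ≤ n := by
      have h2 := hn.2
      simp only [Set.mem_Iic] at h2
      omega
    have := hN n hge hn.1
    rw [diag_eq] at this
    omega
  rintro (⟨_, hp⟩ | ⟨hz, _⟩)
  · exact hnp hp
  · exact hnz hz

open Classical in
/-- the next nonzero point of `f` at or after `n` -/
noncomputable def nxt (f : ℕ → ℕ) (n : ℕ) : ℕ :=
  if h : ∃ i, n ≤ i ∧ f i ≠ 0 then Nat.find h else 0

lemma nxt_spec {f : ℕ → ℕ} (hf : ¬ EvZero f) (n : ℕ) :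
    n ≤ nxt f n ∧ f (nxt f n) ≠ 0 := by
  have hfr : ∃ᶠ m in atTop, f m ≠ 0 := by
    rw [EvZero, not_eventually] at hf
    exact hf
  obtain ⟨i, hi1, hi2⟩ := frequently_atTop.mp hfr n
  have hex : ∃ i, n ≤ i ∧ f i ≠ 0 := ⟨i, hi1, hi2⟩
  unfold nxt
  rw [dif_pos hex]
  exact Nat.find_spec hex

/-- interval partition determined by iterating a growth function -/
noncomputable def tfun (g : ℕ → ℕ) : ℕ → ℕ
  | 0 => 0
  | m + 1 => g (tfun g m) + tfun g m + 1

noncomputable def mkJ (g : ℕ → ℕ) : IntPart where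
  t := tfun g
  t0 := rfl
  mono := strictMono_nat_of_lt_succ (fun n => by
    show tfun g n < g (tfun g n) + tfun g n + 1
    omega)

theorem stmt2 :
    (∀ (F : Set (ℕ → ℕ)) (If : (ℕ → ℕ) → IntPart) (J : IntPart) (π : Predictor),
      (∀ f ∈ F \ {g | EvZero g}, IsNZPart f (If f)) →
      (∀ f ∈ F \ {g | EvZero g}, IPle (If f) J) →
      (∀ f ∈ F \ {g | EvZero g}, Predicts π f) →
      ∃ π' : Predictor, (∀ f ∈ F \ {g | EvZero g}, Predicts π' f) ∧
        ∀ f : ℕ → ℕ, EvZero f → ¬ Predicts π' f) ∧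
    min eNum bNum ≤ eZero := by
  constructor
  · intro F If J π h1 h2 h3
    exact ⟨auxP J π,
      fun f hf => auxP_pred J π f (h3 f hf) (freq_of f (If f) J (h1 f hf) (h2 f hf)),
      fun f hf => auxP_not_pred J π f hf⟩
  · by_contra hlt
    push_neg at hlt
    rw [lt_min_iff] at hlt
    obtain ⟨hE, hB⟩ := hlt
    -- the defining set of eZero is nonempty, so its inf is attained
    have hne : { c | ∃ F : Set (ℕ → ℕ), Cardinal.mk F = c ∧
        ∀ π : Predictor, ∃ f ∈ F, ¬ ZPredicts π f }.Nonempty :=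
      ⟨Cardinal.mk (Set.univ : Set (ℕ → ℕ)), Set.univ, rfl,
        fun π => ⟨diag π, Set.mem_univ _, not_ZPredicts_diag π⟩⟩
    have hmem := csInf_mem hne
    obtain ⟨F, hmk, hF⟩ := hmem
    have hmkF : Cardinal.mk F = eZero := hmk
    set Fm : Set (ℕ → ℕ) := F \ {g | EvZero g} with hFm
    have hFmle : Cardinal.mk Fm ≤ eZero := by
      rw [← hmkF]
      exact Cardinal.mk_le_mk_of_subset Set.diff_subset
    -- Step A: a predictor predicting all of Fm
    have hA : ∃ π : Predictor, ∀ f ∈ Fm, Predicts π f := by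
      by_contra hc
      push_neg at hc
      have : eNum ≤ Cardinal.mk Fm := csInf_le' ⟨Fm, rfl, hc⟩
      exact absurd (lt_of_le_of_lt (le_trans this hFmle) hE) (lt_irrefl _)
    obtain ⟨π, hπ⟩ := hA
    -- Step B: a dominating function for the next-nonzero functions
    have hBdom : ∃ g : ℕ → ℕ, ∀ h ∈ nxt '' Fm, ∀ᶠ n in atTop, h n ≤ g n := by
      by_contra hc
      push_neg at hc
      have : bNum ≤ Cardinal.mk (nxt '' Fm) := csInf_le' ⟨nxt '' Fm, rfl, fun g => by
        obtain ⟨h, hh, hf⟩ := hc g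
        exact ⟨h, hh, by rw [not_eventually]; exact hf.mono fun _ hx => not_le.mpr hx⟩⟩
      have := lt_of_le_of_lt (le_trans this (le_trans Cardinal.mk_image_le hFmle)) hB
      exact absurd this (lt_irrefl _)
    obtain ⟨g, hg⟩ := hBdom
    -- Step C: each f in Fm is frequently nonzero in the blocks of mkJ g
    have hfreq : ∀ f ∈ Fm, ∀ᶠ m in atTop, ∃ i ∈ blk (mkJ g) m, f i ≠ 0 := by
      intro f hf
      have hnz : ¬ EvZero f := hf.2
      obtain ⟨N, hN⟩ := eventually_atTop.mp (hg (nxt f) ⟨f, hf, rfl⟩)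
      rw [eventually_atTop]
      refine ⟨N, fun m hm => ?_⟩
      have htm : N ≤ (mkJ g).t m := le_trans hm (self_le_t (mkJ g) m)
      obtain ⟨hle, hfne⟩ := nxt_spec hnz ((mkJ g).t m)
      refine ⟨nxt f ((mkJ g).t m), ⟨hle, ?_⟩, hfne⟩
      have hdom : nxt f ((mkJ g).t m) ≤ g ((mkJ g).t m) := hN _ htm
      show nxt f ((mkJ g).t m) < g ((mkJ g).t m) + (mkJ g).t m + 1
      omega
    -- Step D: contradiction with the evading property of F
    obtain ⟨f, hfF, hfZ⟩ := hF (auxP (mkJ g) π)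
    by_cases hev : EvZero f
    · exact hfZ (Or.inr ⟨hev, auxP_not_pred (mkJ g) π f hev⟩)
    · have hfm : f ∈ Fm := ⟨hfF, hev⟩
      exact hfZ (Or.inl ⟨hev, auxP_pred (mkJ g) π f (hπ f hfm) (hfreq f hfm)⟩)
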